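/- If a 3-hypergraph H is 2-colorable, then the capacitated graph G(H) admits a sub-5-MCNZF. -/

import Mathlib

open Finset


open Finset

/-- A finite multigraph given with a reference orientation: each edge `e` goes
from `src e` to `tgt e`.  An orientation of the graph is a sign function
`σ : E → ℤˣ` telling, for each edge, whether it keeps (`1`) or reverses (`-1`)
its reference direction. -/
structure Multigraph where
  V : Type
  E : Type
  [fintV : Fintype V]
  [fintE : Fintype E]
  [decV : DecidableEq V]
  [decE : DecidableEq E]
  src : E → V
  tgt : E → V

attribute [instance] Multigraph.fintV Multigraph.fintE Multigraph.decV Multigraph.decE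

/-- `f` is a flow with respect to the reference orientation: at every vertex the
sum over outgoing edges equals the sum over incoming edges. -/
def Multigraph.IsFlow (G : Multigraph) {M : Type*} [AddCommMonoid M] (f : G.E → M) : Prop :=
  ∀ v : G.V,
    ∑ e ∈ Finset.univ.filter (fun e => G.src e = v), f e =
    ∑ e ∈ Finset.univ.filter (fun e => G.tgt e = v), f e

/-- `f` is a flow on the orientation `σ` of `G` (values of `f` are read in the
direction given by `σ`). -/
def Multigraph.IsFlowOn (G : Multigraph) {M : Type*} [AddCommGroup M]
    (σ : G.E → ℤˣ) (f : G.E → M) : Prop :=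
  G.IsFlow (fun e => ((σ e : ℤ) • f e))

/-- The open interval `(a,b)` of `ℝ/rℤ`: the points traversed strictly clockwise
from `a` to `b`, with the convention `(a,a) = ℝ/rℤ \ {a}`. -/
noncomputable def openArc (r a b : ℝ) : Set (AddCircle r) :=
  (fun t : ℝ => (t : AddCircle r)) '' Set.Ioo a (a + (r - Int.fract ((a - b) / r) * r))

/-- The closed interval `[a,b]` of `ℝ/rℤ`: the points traversed clockwise from
`a` to `b`, endpoints included, with the convention `[a,a] = {a}`. -/
noncomputable def closedArc (r a b : ℝ) : Set (AddCircle r) :=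
  (fun t : ℝ => (t : AddCircle r)) '' Set.Icc a (a + Int.fract ((b - a) / r) * r)

/-- `G` has a circular nowhere-zero `r`-flow: an orientation together with a
real-valued flow all of whose values lie in `[1, r-1]`. -/
def Multigraph.HasCNZF (G : Multigraph) (r : ℝ) : Prop :=
  ∃ (σ : G.E → ℤˣ) (f : G.E → ℝ), G.IsFlowOn σ f ∧ ∀ e, f e ∈ Set.Icc (1:ℝ) (r - 1)

/-- The circular flow number of `G`, as an extended real (`⊤` if `G` admits no
circular nowhere-zero `r`-flow for any `r`, e.g. if `G` has a bridge). -/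
noncomputable def circFlowNumber (G : Multigraph) : EReal :=
  sInf {x : EReal | ∃ r : ℝ, x = (r : EReal) ∧ G.HasCNZF r}

/-- The graph `G ∪ e₀` obtained from `G` by adding one extra edge `e₀ = none`
joining `u` to `v`. -/
def Multigraph.addEdge (G : Multigraph) (u v : G.V) : Multigraph where
  V := G.V
  E := Option G.E
  src := fun e => e.elim u G.src
  tgt := fun e => e.elim v G.tgt

/-- The capacity of the capacitated g-edge `(G, cap)` with terminals `u,v`:
all values `f e₀` of modular flows `f` on `G ∪ e₀` (over all orientations) whose
value on each edge `e` of `G` lies in the prescribed set `cap e`. -/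
def CPcap (r : ℝ) (G : Multigraph) (cap : G.E → Set (AddCircle r)) (u v : G.V) :
    Set (AddCircle r) :=
  {t | ∃ (σ : Option G.E → ℤˣ) (f : Option G.E → AddCircle r),
        (G.addEdge u v).IsFlowOn σ f ∧ (∀ e : G.E, f (some e) ∈ cap e) ∧ f none = t}

/-- The open `r`-capacity `CP_r(G_{u,v})` of the g-edge `G_{u,v}`. -/
noncomputable def CP (r : ℝ) (G : Multigraph) (u v : G.V) : Set (AddCircle r) :=
  CPcap r G (fun _ => openArc r 1 (r - 1)) u v

/-- A capacitated graph `(G, cap)` admits a flow respecting all capacities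
(for `cap e = (1,4) ⊆ ℝ/5ℤ` everywhere this is a sub-5-MCNZF). -/
def HasCapFlow (r : ℝ) (G : Multigraph) (cap : G.E → Set (AddCircle r)) : Prop :=
  ∃ (σ : G.E → ℤˣ) (f : G.E → AddCircle r), G.IsFlowOn σ f ∧ ∀ e, f e ∈ cap e

/-- Deletion of the edge `e₀`. -/
def Multigraph.deleteEdge (G : Multigraph) (e₀ : G.E) : Multigraph where
  V := G.V
  E := {e : G.E // e ≠ e₀}
  src := fun e => G.src e.1
  tgt := fun e => G.tgt e.1

/-- Degree of a vertex (loops count twice). -/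
def Multigraph.degree (G : Multigraph) (v : G.V) : ℕ :=
  (Finset.univ.filter (fun e => G.src e = v)).card +
  (Finset.univ.filter (fun e => G.tgt e = v)).card

/-- The tail of edge `e` in the orientation `σ`. -/
def Multigraph.osrc (G : Multigraph) (σ : G.E → ℤˣ) (e : G.E) : G.V :=
  if σ e = 1 then G.src e else G.tgt e

/-- The head of edge `e` in the orientation `σ`. -/
def Multigraph.otgt (G : Multigraph) (σ : G.E → ℤˣ) (e : G.E) : G.V :=
  if σ e = 1 then G.tgt e else G.src e

section GH

variable {n N : ℕ} (tri : Fin N → Fin 3 → Fin n)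

/-- The occurrences of the node `x`: pairs `(T, i)` such that `x` is the `i`-th
node of the triplet `T`. -/
def occSet (x : Fin n) : Type := {p : Fin N × Fin 3 // tri p.1 p.2 = x}

instance (x : Fin n) : Fintype (occSet tri x) := by unfold occSet; infer_instance
instance (x : Fin n) : DecidableEq (occSet tri x) := by unfold occSet; infer_instance

variable (enum : ∀ x : Fin n, occSet tri x ≃ Fin (Fintype.card (occSet tri x)))

/-- The cyclic successor of an occurrence of `x`, in the cyclic order given by
the enumeration `enum x`. -/
def nxtOcc (x : Fin n) (o : occSet tri x) : occSet tri x :=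
  (enum x).symm ⟨((enum x o : Fin _).1 + 1) % Fintype.card (occSet tri x),
    Nat.mod_lt _ (Fintype.card_pos_iff.mpr ⟨o⟩)⟩

/-- The cyclic order `(T₁⁺, T₂⁺, T₃⁺, T₃⁻, T₂⁻, T₁⁻)` of a triplet-cycle
(`true` = positive, `false` = negative). -/
def cyc6 : Fin 6 → Fin 3 × Bool :=
  ![(0, true), (1, true), (2, true), (2, false), (1, false), (0, false)]

/-- The capacitated graph `G(H)` associated with the 3-hypergraph `H` given by
`tri` (with a chosen cyclic enumeration `enum x` of the occurrences of each node
`x`).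

Vertices: `Sum.inl (o, s)` is the positive (`s = true`) or negative
(`s = false`) terminal of the node-cycle `C(tri o.1 o.2)` associated with the
occurrence `o`; `Sum.inr ((T,i), s)` is the vertex `Tᵢ⁺` (resp. `Tᵢ⁻`) of the
triplet-cycle `C(T)`.

Edges: `Sum.inl (o, true)` joins the two terminals of the occurrence `o`, and
`Sum.inl (o, false)` joins the negative terminal of `o` to the positive
terminal of the next occurrence of the same node, so that the node-cycle
`C(x)` passes through its positive and negative terminals alternately, and has
length twice the number of triplets containing `x`; `Sum.inr (Sum.inl (T,j))`
is the `j`-th edge of the triplet-cycle `C(T)`, in the cyclic order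
`(T₁⁺, T₂⁺, T₃⁺, T₃⁻, T₂⁻, T₁⁻)`; `Sum.inr (Sum.inr (o, s))` is the connector
joining the positive (resp. negative) terminal of the occurrence `o = (T,i)`
to `Tᵢ⁺` (resp. `Tᵢ⁻`). -/
def GH : Multigraph where
  V := ((Fin N × Fin 3) × Bool) ⊕ ((Fin N × Fin 3) × Bool)
  E := ((Fin N × Fin 3) × Bool) ⊕ ((Fin N × Fin 6) ⊕ ((Fin N × Fin 3) × Bool))
  src := fun e =>
    match e with
    | Sum.inl (o, true) => Sum.inl (o, true)
    | Sum.inl (o, false) => Sum.inl (o, false)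
    | Sum.inr (Sum.inl (T, j)) => Sum.inr ((T, (cyc6 j).1), (cyc6 j).2)
    | Sum.inr (Sum.inr (o, s)) => Sum.inl (o, s)
  tgt := fun e =>
    match e with
    | Sum.inl (o, true) => Sum.inl (o, false)
    | Sum.inl (o, false) => Sum.inl ((nxtOcc tri enum (tri o.1 o.2) ⟨o, rfl⟩).1, true)
    | Sum.inr (Sum.inl (T, j)) => Sum.inr ((T, (cyc6 (j + 1)).1), (cyc6 (j + 1)).2)
    | Sum.inr (Sum.inr (o, s)) => Sum.inr (o, s)

/-- The capacities of `G(H)`: node-cycle edges and connectors get capacity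
`(1,2) ∪ (3,4)`, triplet-cycle edges get capacity `(1,4)`. -/
noncomputable def GHcap : (GH tri enum).E → Set (AddCircle (5:ℝ)) := fun e =>
  match e with
  | Sum.inl _ => openArc 5 1 2 ∪ openArc 5 3 4
  | Sum.inr (Sum.inl _) => openArc 5 1 4
  | Sum.inr (Sum.inr _) => openArc 5 1 2 ∪ openArc 5 3 4

/-- The 3-hypergraph given by `tri` is 2-colorable: the nodes can be 2-colored
so that no triplet is monochromatic. -/
def TwoColorable : Prop :=
  ∃ c : Fin n → Bool, ∀ T : Fin N,
    (∃ i : Fin 3, c (tri T i) = true) ∧ (∃ i : Fin 3, c (tri T i) = false)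

end GH


section Aux

lemma coe_shift5 (t : ℝ) : ((t + 5 : ℝ) : AddCircle (5:ℝ)) = ((t:ℝ) : AddCircle (5:ℝ)) := by
  have h : ((5:ℝ) : AddCircle (5:ℝ)) = 0 := AddCircle.coe_period 5
  rw [QuotientAddGroup.mk_add, h, add_zero]

lemma mem_arc14 {t : ℝ} (h1 : 1 < t) (h2 : t < 4) :
    ((t:ℝ) : AddCircle (5:ℝ)) ∈ openArc 5 1 4 := by
  refine ⟨t, ⟨h1, ?_⟩, rfl⟩
  have hfl : ⌊((1:ℝ) - 4)/5⌋ = -1 := by rw [Int.floor_eq_iff] <;> norm_num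
  rw [Int.fract, hfl]; push_cast; linarith

lemma mem_arc12 {t : ℝ} (h1 : 1 < t) (h2 : t < 2) :
    ((t:ℝ) : AddCircle (5:ℝ)) ∈ openArc 5 1 2 := by
  refine ⟨t, ⟨h1, ?_⟩, rfl⟩
  have hfl : ⌊((1:ℝ) - 2)/5⌋ = -1 := by rw [Int.floor_eq_iff] <;> norm_num
  rw [Int.fract, hfl]; push_cast; linarith

lemma mem_arc34 {t : ℝ} (h1 : 3 < t) (h2 : t < 4) :
    ((t:ℝ) : AddCircle (5:ℝ)) ∈ openArc 5 3 4 := by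
  refine ⟨t, ⟨h1, ?_⟩, rfl⟩
  have hfl : ⌊((3:ℝ) - 4)/5⌋ = -1 := by rw [Int.floor_eq_iff] <;> norm_num
  rw [Int.fract, hfl]; push_cast; linarith

lemma mem_arc14' {t : ℝ}
    (h : (1 < t ∧ t < 4) ∨ (6 < t ∧ t < 9) ∨ (11 < t ∧ t < 14)) :
    ((t:ℝ) : AddCircle (5:ℝ)) ∈ openArc 5 1 4 := by
  rcases h with ⟨h1, h2⟩ | ⟨h1, h2⟩ | ⟨h1, h2⟩
  · exact mem_arc14 h1 h2
  · rw [show t = (t - 5) + 5 by ring, coe_shift5]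
    exact mem_arc14 (by linarith) (by linarith)
  · rw [show t = ((t - 10) + 5) + 5 by ring, coe_shift5, coe_shift5]
    exact mem_arc14 (by linarith) (by linarith)

lemma mem_capN {t : ℝ}
    (h : (1 < t ∧ t < 2) ∨ (3 < t ∧ t < 4) ∨ (6 < t ∧ t < 7) ∨ (8 < t ∧ t < 9)
       ∨ (-4 < t ∧ t < -3) ∨ (-2 < t ∧ t < -1)) :
    ((t:ℝ) : AddCircle (5:ℝ)) ∈ openArc 5 1 2 ∪ openArc 5 3 4 := by
  rcases h with ⟨h1,h2⟩|⟨h1,h2⟩|⟨h1,h2⟩|⟨h1,h2⟩|⟨h1,h2⟩|⟨h1,h2⟩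
  · exact Or.inl (mem_arc12 h1 h2)
  · exact Or.inr (mem_arc34 h1 h2)
  · rw [show t = (t-5)+5 by ring, coe_shift5]; exact Or.inl (mem_arc12 (by linarith) (by linarith))
  · rw [show t = (t-5)+5 by ring, coe_shift5]; exact Or.inr (mem_arc34 (by linarith) (by linarith))
  · rw [show ((t:ℝ) : AddCircle (5:ℝ)) = ((t+5 : ℝ) : AddCircle (5:ℝ)) from (coe_shift5 t).symm]
    exact Or.inl (mem_arc12 (by linarith) (by linarith))
  · rw [show ((t:ℝ) : AddCircle (5:ℝ)) = ((t+5 : ℝ) : AddCircle (5:ℝ)) from (coe_shift5 t).symm]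
    exact Or.inr (mem_arc34 (by linarith) (by linarith))

variable {n N : ℕ} (tri : Fin N → Fin 3 → Fin n)
variable (enum : ∀ x : Fin n, occSet tri x ≃ Fin (Fintype.card (occSet tri x)))

def nodeNxt : Fin N × Fin 3 → Fin N × Fin 3 :=
  fun o => (nxtOcc tri enum (tri o.1 o.2) ⟨o, rfl⟩).1

lemma tri_nodeNxt (o : Fin N × Fin 3) :
    tri (nodeNxt tri enum o).1 (nodeNxt tri enum o).2 = tri o.1 o.2 :=
  (nxtOcc tri enum (tri o.1 o.2) ⟨o, rfl⟩).2

lemma nxtOcc_injective (x : Fin n) : Function.Injective (nxtOcc tri enum x) := by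
  intro a b h
  unfold nxtOcc at h
  have h' := congrArg (enum x) h
  rw [Equiv.apply_symm_apply, Equiv.apply_symm_apply] at h'
  have h2 : ((enum x a : Fin _).1 + 1) % Fintype.card (occSet tri x)
      = ((enum x b : Fin _).1 + 1) % Fintype.card (occSet tri x) := congrArg Fin.val h'
  have ha := (enum x a).2
  have hb := (enum x b).2
  set k := Fintype.card (occSet tri x) with hk
  have key : ∀ m : ℕ, m < k → (m+1) % k = if m + 1 = k then 0 else m + 1 := by
    intro m hm
    split
    · next hmk => rw [hmk, Nat.mod_self]
    · next hmk => exact Nat.mod_eq_of_lt (by omega)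
  rw [key _ ha, key _ hb] at h2
  have hv : ((enum x a : Fin k) : ℕ) = ((enum x b : Fin k) : ℕ) := by
    split_ifs at h2 <;> omega
  exact (enum x).injective (Fin.ext hv)

lemma nodeNxt_val (x : Fin n) (o : Fin N × Fin 3) (h : tri o.1 o.2 = x) :
    nodeNxt tri enum o = (nxtOcc tri enum x ⟨o, h⟩).1 := by
  subst h; rfl

lemma nodeNxt_bijective : Function.Bijective (nodeNxt tri enum) := by
  rw [← Finite.injective_iff_bijective]
  intro a b h
  have hx : tri b.1 b.2 = tri a.1 a.2 := by
    rw [← tri_nodeNxt tri enum a, ← tri_nodeNxt tri enum b, h]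
  have ha : nodeNxt tri enum a = (nxtOcc tri enum (tri a.1 a.2) ⟨a, rfl⟩).1 := rfl
  have hb : nodeNxt tri enum b = (nxtOcc tri enum (tri a.1 a.2) ⟨b, hx⟩).1 :=
    nodeNxt_val tri enum _ b hx
  have heq : nxtOcc tri enum (tri a.1 a.2) ⟨a, rfl⟩ = nxtOcc tri enum (tri a.1 a.2) ⟨b, hx⟩ :=
    Subtype.ext (by rw [← ha, ← hb, h])
  have := nxtOcc_injective tri enum _ heq
  exact congrArg Subtype.val this

end Aux
section Flow
variable {n N : ℕ} (tri : Fin N → Fin 3 → Fin n)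
variable (enum : ∀ x : Fin n, occSet tri x ≃ Fin (Fintype.card (occSet tri x)))

noncomputable def acol : Bool → ℝ := fun b => if b then 16/5 else 17/10

noncomputable def pv (c0 c1 c2 : Bool) (i : Fin 3) : ℝ :=
  if (if i = 0 then c0 else if i = 1 then c1 else c2) then 13/10
  else if (c0 && c1) || (c1 && c2) || (c0 && c2) then 31/10 else 18/5

noncomputable def g5v (c0 c1 c2 : Bool) : ℝ :=
  match c0, c1, c2 with
  | true, true, false => 11/10
  | true, false, true => 9/5
  | false, true, true => 31/10
  | false, false, true => 39/10
  | false, true, false => 13/5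
  | true, false, false => 13/5
  | _, _, _ => 0

noncomputable def gEv (c0 c1 c2 : Bool) (j : Fin 6) : ℝ :=
  if j = 0 then g5v c0 c1 c2 + pv c0 c1 c2 0
  else if j = 1 then g5v c0 c1 c2 + pv c0 c1 c2 0 + pv c0 c1 c2 1
  else if j = 2 then g5v c0 c1 c2 + pv c0 c1 c2 0 + pv c0 c1 c2 1 + pv c0 c1 c2 2
  else if j = 3 then g5v c0 c1 c2 + pv c0 c1 c2 0 + pv c0 c1 c2 1
  else if j = 4 then g5v c0 c1 c2 + pv c0 c1 c2 0
  else g5v c0 c1 c2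

noncomputable def flowF (c : Fin n → Bool) : (GH tri enum).E → AddCircle (5:ℝ) :=
  fun e =>
  match e with
  | Sum.inl (o, true) =>
      ((acol (c (tri o.1 o.2)) - pv (c (tri o.1 0)) (c (tri o.1 1)) (c (tri o.1 2)) o.2 : ℝ)
        : AddCircle (5:ℝ))
  | Sum.inl (o, false) => ((acol (c (tri o.1 o.2)) : ℝ) : AddCircle (5:ℝ))
  | Sum.inr (Sum.inl (T, j)) =>
      ((gEv (c (tri T 0)) (c (tri T 1)) (c (tri T 2)) j : ℝ) : AddCircle (5:ℝ))
  | Sum.inr (Sum.inr (o, true)) =>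
      ((pv (c (tri o.1 0)) (c (tri o.1 1)) (c (tri o.1 2)) o.2 : ℝ) : AddCircle (5:ℝ))
  | Sum.inr (Sum.inr (o, false)) =>
      ((-(pv (c (tri o.1 0)) (c (tri o.1 1)) (c (tri o.1 2)) o.2) : ℝ) : AddCircle (5:ℝ))

lemma sum_pair_pick {M : Type*} [AddCommMonoid M] (o : Fin N × Fin 3) (F : Fin N × Fin 3 → M) :
    (∑ x : Fin N, ∑ y : Fin 3, if (x, y) = o then F (x, y) else 0) = F o := by
  rw [← Fintype.sum_prod_type (f := fun p : Fin N × Fin 3 => if p = o then F p else 0)]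
  rw [Finset.sum_ite_eq']; simp

lemma sum_nodeNxt_pick (c : Fin n → Bool) (o : Fin N × Fin 3) :
    (∑ x : Fin N, ∑ y : Fin 3,
      if (nxtOcc tri enum (tri x y) ⟨(x, y), rfl⟩).1 = o
      then ((acol (c (tri x y)) : ℝ) : AddCircle (5:ℝ)) else 0)
    = ((acol (c (tri o.1 o.2)) : ℝ) : AddCircle (5:ℝ)) := by
  have key : ∀ p : Fin N × Fin 3,
      (if nodeNxt tri enum p = o then ((acol (c (tri p.1 p.2)) : ℝ) : AddCircle (5:ℝ)) else 0)
      = (fun q : Fin N × Fin 3 =>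
          if q = o then ((acol (c (tri q.1 q.2)) : ℝ) : AddCircle (5:ℝ)) else 0)
          (nodeNxt tri enum p) := by
    intro p
    by_cases h : nodeNxt tri enum p = o
    · have ht : tri o.1 o.2 = tri p.1 p.2 := by
        rw [← h]; exact tri_nodeNxt tri enum p
      simp [h, ht]
    · simp [h]
  have hrw : ∀ (x : Fin N) (y : Fin 3),
      (nxtOcc tri enum (tri x y) ⟨(x, y), rfl⟩).1 = nodeNxt tri enum (x, y) := fun _ _ => rfl
  simp only [hrw]
  rw [← Fintype.sum_prod_type (f := fun p : Fin N × Fin 3 =>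
    if nodeNxt tri enum p = o then ((acol (c (tri p.1 p.2)) : ℝ) : AddCircle (5:ℝ)) else 0)]
  refine (Finset.sum_congr rfl (fun p _ => key p)).trans ?_
  exact (Function.Bijective.sum_comp (nodeNxt_bijective tri enum)
      (fun q : Fin N × Fin 3 =>
        if q = o then ((acol (c (tri q.1 q.2)) : ℝ) : AddCircle (5:ℝ)) else 0)).trans
    (by rw [Finset.sum_ite_eq']; simp)

lemma cyc6_0 : cyc6 0 = (0, true) := rfl
lemma cyc6_1 : cyc6 1 = (1, true) := rfl
lemma cyc6_2 : cyc6 2 = (2, true) := rfl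
lemma cyc6_3 : cyc6 3 = (2, false) := rfl
lemma cyc6_4 : cyc6 4 = (1, false) := rfl
lemma cyc6_5 : cyc6 5 = (0, false) := rfl

lemma flow_conserv (c : Fin n → Bool) : (GH tri enum).IsFlow (flowF tri enum c) := by
  intro v
  rw [Finset.sum_filter, Finset.sum_filter]
  delta GH
  rcases v with ⟨o, sb⟩ | ⟨⟨T, i⟩, s⟩
  · cases sb
    · simp only [Fintype.sum_sum_type, Fintype.sum_prod_type, Fintype.sum_bool, GH,
        Sum.inl.injEq, Sum.inr.injEq, Prod.mk.injEq, reduceCtorEq, if_false,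
        Finset.sum_const_zero, add_zero, zero_add, and_true, and_false, ite_false,
        Bool.true_eq_false, Bool.false_eq_true, false_and, and_false]
      rw [sum_pair_pick o (fun p => flowF tri enum c (Sum.inl (p, false))),
        sum_pair_pick o (fun p => flowF tri enum c (Sum.inr (Sum.inr (p, false)))),
        sum_pair_pick o (fun p => flowF tri enum c (Sum.inl (p, true)))]
      simp only [flowF]
      rw [← QuotientAddGroup.mk_add]
      exact congrArg _ (by ring)
    · simp only [Fintype.sum_sum_type, Fintype.sum_prod_type, Fintype.sum_bool, GH,
        Sum.inl.injEq, Sum.inr.injEq, Prod.mk.injEq, reduceCtorEq, if_false,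
        Finset.sum_const_zero, add_zero, zero_add, and_true, and_false, ite_false,
        Bool.true_eq_false, Bool.false_eq_true, false_and, and_false]
      rw [sum_pair_pick o (fun p => flowF tri enum c (Sum.inl (p, true))),
        sum_pair_pick o (fun p => flowF tri enum c (Sum.inr (Sum.inr (p, true))))]
      simp only [flowF]
      rw [sum_nodeNxt_pick tri enum c o, ← QuotientAddGroup.mk_add]
      exact congrArg _ (by ring)
  · simp only [Fintype.sum_sum_type, Fintype.sum_prod_type, Fintype.sum_bool, GH,
        Sum.inl.injEq, Sum.inr.injEq, Prod.mk.injEq, reduceCtorEq, if_false,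
        Finset.sum_const_zero, add_zero, zero_add, and_true, and_false, ite_false,
        Bool.true_eq_false, Bool.false_eq_true, false_and, and_false]
    fin_cases i <;> cases s <;>
      simp only [Fin.sum_univ_six, Fin.sum_univ_three, Fin.isValue, Fin.reduceAdd,
        cyc6_0, cyc6_1, cyc6_2, cyc6_3, cyc6_4, cyc6_5,
        Prod.mk.injEq, Bool.true_eq_false, Bool.false_eq_true,
        Fin.reduceEq, and_true, and_false, true_and, false_and, if_true, if_false,
        ite_false, ite_true, Finset.sum_const_zero, add_zero, zero_add,
        Finset.sum_ite_eq', Finset.mem_univ, Fin.zero_eta, Fin.mk_one, Fin.reduceFinMk, if_pos] <;>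
    (simp only [flowF]
     rw [← QuotientAddGroup.mk_add]
     refine congrArg _ ?_
     simp only [gEv, Fin.reduceEq, if_true, if_false, ite_true, ite_false, reduceIte] <;> ring)

lemma sel_eq (c : Fin n → Bool) (T : Fin N) (i : Fin 3) :
    (if i = 0 then c (tri T 0) else if i = 1 then c (tri T 1) else c (tri T 2)) = c (tri T i) := by
  fin_cases i <;> simp

lemma flow_capacity (c : Fin n → Bool)
    (hc : ∀ T : Fin N, (∃ i : Fin 3, c (tri T i) = true) ∧ (∃ i : Fin 3, c (tri T i) = false)) :
    ∀ e, flowF tri enum c e ∈ GHcap tri enum e := by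
  intro e
  rcases e with ⟨⟨T, i⟩, b⟩ | (⟨T, j⟩ | ⟨⟨T, i⟩, b⟩)
  · cases b
    · simp only [flowF, GHcap]
      cases hcx : c (tri T i) <;>
        (apply mem_capN; norm_num [acol])
    · simp only [flowF, GHcap, pv]
      rw [sel_eq tri c T i]
      cases hcx : c (tri T i)
      · by_cases hcond : ((c (tri T 0) && c (tri T 1)) || (c (tri T 1) && c (tri T 2))
            || (c (tri T 0) && c (tri T 2))) = true <;>
          (apply mem_capN; simp [hcond, acol]; norm_num)
      · apply mem_capN; simp [acol]; norm_num
  · -- triplet edge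
    simp only [flowF, GHcap]
    have h1 := (hc T).1
    have h2 := (hc T).2
    cases h0 : c (tri T 0) <;> cases hA : c (tri T 1) <;> cases hB : c (tri T 2)
    · exfalso; obtain ⟨i, hi⟩ := h1; fin_cases i <;> simp_all
    all_goals try (fin_cases j <;>
      (apply mem_arc14'; simp only [gEv, g5v, pv, h0, hA, hB, Fin.reduceFinMk,
        Fin.reduceEq, reduceIte, Bool.and_self, Bool.and_false, Bool.false_and,
        Bool.and_true, Bool.true_and, Bool.or_self, Bool.or_false, Bool.false_or,
        Bool.or_true, Bool.true_or, if_true, if_false, ite_true, ite_false]; norm_num))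
    · exfalso; obtain ⟨i, hi⟩ := h2; fin_cases i <;> simp_all
  · cases b
    · simp only [flowF, GHcap, pv]
      by_cases hsel : (if i = 0 then c (tri T 0) else if i = 1 then c (tri T 1)
          else c (tri T 2)) = true
      · apply mem_capN; simp [hsel]; norm_num
      · by_cases hcond : ((c (tri T 0) && c (tri T 1)) || (c (tri T 1) && c (tri T 2))
            || (c (tri T 0) && c (tri T 2))) = true <;>
          (apply mem_capN; simp [hsel, hcond]; norm_num)
    · simp only [flowF, GHcap, pv]
      by_cases hsel : (if i = 0 then c (tri T 0) else if i = 1 then c (tri T 1)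
          else c (tri T 2)) = true
      · apply mem_capN; simp [hsel]; norm_num
      · by_cases hcond : ((c (tri T 0) && c (tri T 1)) || (c (tri T 1) && c (tri T 2))
            || (c (tri T 0) && c (tri T 2))) = true <;>
          (apply mem_capN; simp [hsel, hcond]; norm_num)

end Flow

/-- If the 3-hypergraph `H` (with node set `Fin n`, triplets
indexed by `Fin N` via `tri`, each triplet consisting of three distinct nodes)
is 2-colorable, then the capacitated graph `G(H)` admits a sub-5-MCNZF. -/
theorem twoColorable_implies_flow {n N : ℕ} (tri : Fin N → Fin 3 → Fin n)
    (htri : ∀ T : Fin N, Function.Injective (tri T))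
    (enum : ∀ x : Fin n, occSet tri x ≃ Fin (Fintype.card (occSet tri x))) :
    TwoColorable tri → HasCapFlow 5 (GH tri enum) (GHcap tri enum) := by
  rintro ⟨c, hc⟩
  refine ⟨fun _ => 1, flowF tri enum c, ?_, flow_capacity tri enum c hc⟩
  have h := flow_conserv tri enum c
  unfold Multigraph.IsFlowOn
  simpa using h
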